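/- The Bernoulli polynomial of higher order B_n(x_1,…,x_m), defined by ∏_{i=1}^m (x_i t)/(e^{x_i t}-1) = Σ_{n≥0} B_n(x^m) t^n/n!, equals the complete Bell polynomial 𝔹_n(b_1, b_2, …) evaluated at b_r = (-1)^{r-1} B_r p_r(x^m)/r, where p_r(x^m) = Σ_{i=1}^m x_i^r and B_r are Bernoulli numbers. -/

import Mathlib

open scoped BigOperators

/-- Formal exponential of a power series with zero constant term. -/
noncomputable def expPS {R : Type*} [CommRing R] [Algebra ℚ R]
    (f : PowerSeries R) : PowerSeries R :=
  PowerSeries.mk fun n =>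
    ∑ j ∈ Finset.range (n + 1),
      ((Nat.factorial j : ℚ)⁻¹) • (PowerSeries.coeff (R := R) n (f ^ j))

/-- The `n`-th complete Bell polynomial of `b_1, b_2, …`, defined by
`exp(∑_{i≥1} b_i t^i/i!) = ∑_{r≥0} 𝔹_r t^r/r!`. -/
noncomputable def completeBell {R : Type*} [CommRing R] [Algebra ℚ R]
    (n : ℕ) (b : ℕ → R) : R :=
  (Nat.factorial n : ℚ) •
    PowerSeries.coeff (R := R) n
      (expPS (PowerSeries.mk fun i =>
        if i = 0 then 0 else ((Nat.factorial i : ℚ)⁻¹) • b i))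

/-- The power sum `p_k = ∑_{i=1}^m x_i^k`. -/
noncomputable def psum (m k : ℕ) : MvPolynomial (Fin m) ℚ :=
  ∑ i : Fin m, MvPolynomial.X i ^ k

/-- The Bernoulli polynomial of higher order `B_n(x_1,…,x_m)`, defined by
`∏_{i=1}^m (x_i t)/(e^{x_i t}-1) = ∑_{n≥0} B_n(x^m) t^n/n!`. -/
noncomputable def higherBernoulli (m n : ℕ) : MvPolynomial (Fin m) ℚ :=
  (Nat.factorial n : ℚ) •
    PowerSeries.coeff (R := MvPolynomial (Fin m) ℚ) n
      (∏ i : Fin m, PowerSeries.mk fun k =>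
        (bernoulli k / (Nat.factorial k : ℚ)) • (MvPolynomial.X i ^ k))

open PowerSeries
set_option linter.unusedSectionVars false

section basic
variable {R : Type*} [CommRing R] [Algebra ℚ R]

private lemma coeff_pow_eq_zero' {f : PowerSeries R} (hf : constantCoeff (R := R) f = 0)
    {j n : ℕ} (h : n < j) : PowerSeries.coeff (R := R) n (f ^ j) = 0 := by
  induction j generalizing n with
  | zero => omega
  | succ j ih =>
    rw [pow_succ', PowerSeries.coeff_mul]
    apply Finset.sum_eq_zero
    rintro ⟨p, q⟩ hpq
    rw [Finset.HasAntidiagonal.mem_antidiagonal] at hpq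
    rcases Nat.eq_zero_or_pos p with hp | hp
    · subst hp
      simp [PowerSeries.coeff_zero_eq_constantCoeff, hf]
    · have hq : q < j := by omega
      rw [ih hq, mul_zero]

private lemma coeff_expPS {f : PowerSeries R} (hf : constantCoeff (R := R) f = 0) {n N : ℕ}
    (hN : n < N) :
    PowerSeries.coeff (R := R) n (expPS f) =
      ∑ j ∈ Finset.range N, ((Nat.factorial j : ℚ)⁻¹) • (PowerSeries.coeff (R := R) n (f ^ j)) := by
  rw [expPS, PowerSeries.coeff_mk]
  apply Finset.sum_subset
  · exact Finset.range_subset_range.2 hN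
  · intro j hj hj2
    rw [Finset.mem_range] at hj hj2
    rw [coeff_pow_eq_zero' hf (by omega), smul_zero]

private lemma constantCoeff_expPS (f : PowerSeries R) : constantCoeff (R := R) (expPS f) = 1 := by
  rw [← PowerSeries.coeff_zero_eq_constantCoeff_apply, expPS, PowerSeries.coeff_mk]
  simp

private lemma expPS_zero : expPS (0 : PowerSeries R) = 1 := by
  ext n
  rw [expPS, PowerSeries.coeff_mk, Finset.sum_eq_single 0]
  · simp
  · intro j hj hj0
    rw [zero_pow hj0, map_zero, smul_zero]
  · intro h; simp at h

private lemma derivative_expPS {f : PowerSeries R} (hf : constantCoeff (R := R) f = 0) :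
    d⁄dX R (expPS f) = d⁄dX R f * expPS f := by
  ext n
  trans (∑ i ∈ Finset.range (n+1),
      (Nat.factorial i : ℚ)⁻¹ • PowerSeries.coeff (R := R) n (f ^ i * d⁄dX R f))
  · rw [PowerSeries.coeff_derivative, coeff_expPS hf (show n + 1 < n + 2 by omega),
      Finset.sum_mul]
    have lhs_term : ∀ j ∈ Finset.range (n+2),
        ((Nat.factorial j : ℚ)⁻¹ • PowerSeries.coeff (R := R) (n+1) (f ^ j)) * ((n : R) + 1)
          = (Nat.factorial j : ℚ)⁻¹ • ((j : ℚ) • PowerSeries.coeff (R := R) n (f ^ (j-1) * d⁄dX R f)) := by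
      intro j _
      rw [smul_mul_assoc, ← PowerSeries.coeff_derivative, Derivation.leibniz_pow,
        smul_eq_mul, map_nsmul, ← Nat.cast_smul_eq_nsmul ℚ]
    rw [Finset.sum_congr rfl lhs_term, Finset.sum_range_succ']
    simp only [Nat.cast_zero, zero_smul, smul_zero, add_zero, Nat.add_sub_cancel]
    refine Finset.sum_congr rfl fun i _ => ?_
    rw [smul_smul, Nat.factorial_succ]
    congr 1
    have h1 : ((i:ℚ) + 1) ≠ 0 := by positivity
    have h2 : (Nat.factorial i : ℚ) ≠ 0 := Nat.cast_ne_zero.2 (Nat.factorial_ne_zero i)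
    push_cast
    field_simp
  · rw [mul_comm (d⁄dX R f), PowerSeries.coeff_mul]
    have rhs_term : ∀ pq ∈ Finset.HasAntidiagonal.antidiagonal n,
        PowerSeries.coeff (R := R) pq.1 (expPS f) * PowerSeries.coeff (R := R) pq.2 (d⁄dX R f)
          = ∑ i ∈ Finset.range (n+1),
              (Nat.factorial i : ℚ)⁻¹ •
                (PowerSeries.coeff (R := R) pq.1 (f ^ i) * PowerSeries.coeff (R := R) pq.2 (d⁄dX R f)) := by
      rintro ⟨p, q⟩ hpq
      rw [Finset.HasAntidiagonal.mem_antidiagonal] at hpq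
      rw [coeff_expPS hf (show p < n + 1 by omega), Finset.sum_mul]
      exact Finset.sum_congr rfl fun i _ => smul_mul_assoc _ _ _
    rw [Finset.sum_congr rfl rhs_term, Finset.sum_comm]
    refine Finset.sum_congr rfl fun i _ => ?_
    rw [← Finset.smul_sum, PowerSeries.coeff_mul]

private lemma ode_unique {u b c : PowerSeries R}
    (hb : d⁄dX R b = u * b) (hc : d⁄dX R c = u * c)
    (h0 : PowerSeries.coeff (R := R) 0 b = PowerSeries.coeff (R := R) 0 c) : b = c := by
  ext n
  induction n using Nat.strong_induction_on with
  | _ n ih =>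
    match n with
    | 0 => exact h0
    | Nat.succ n =>
      have hb' := congrArg (PowerSeries.coeff (R := R) n) hb
      have hc' := congrArg (PowerSeries.coeff (R := R) n) hc
      rw [PowerSeries.coeff_derivative, PowerSeries.coeff_mul] at hb' hc'
      have cast : ∀ x : R, x * ((n : R) + 1) = ((n : ℚ) + 1) • x := by
        intro x
        rw [Algebra.smul_def, map_add, map_one, map_natCast, mul_comm]
      rw [cast] at hb' hc'
      have key : ((n : ℚ) + 1) • PowerSeries.coeff (R := R) (n+1) b
          = ((n : ℚ) + 1) • PowerSeries.coeff (R := R) (n+1) c := by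
        rw [hb', hc']
        refine Finset.sum_congr rfl ?_
        rintro ⟨p, q⟩ hpq
        rw [Finset.HasAntidiagonal.mem_antidiagonal] at hpq
        rw [ih q (by omega)]
      have hq : ((n : ℚ) + 1) ≠ 0 := by positivity
      have := congrArg (fun x : R => ((n : ℚ) + 1)⁻¹ • x) key
      simpa [smul_smul, inv_mul_cancel₀ hq] using this

private lemma expPS_add {f g : PowerSeries R} (hf : constantCoeff (R := R) f = 0)
    (hg : constantCoeff (R := R) g = 0) : expPS (f + g) = expPS f * expPS g := by
  apply ode_unique (u := d⁄dX R f + d⁄dX R g)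
  · rw [derivative_expPS (show constantCoeff (R := R) (f + g) = 0 by rw [map_add, hf, hg, add_zero]),
      map_add]
  · rw [Derivation.leibniz, smul_eq_mul, smul_eq_mul, derivative_expPS hf, derivative_expPS hg]
    ring
  · simp only [PowerSeries.coeff_zero_eq_constantCoeff, map_mul, constantCoeff_expPS, mul_one]

private lemma expPS_sum {ι : Type*} (s : Finset ι) (f : ι → PowerSeries R)
    (hf : ∀ i ∈ s, constantCoeff (R := R) (f i) = 0) :
    expPS (∑ i ∈ s, f i) = ∏ i ∈ s, expPS (f i) := by
  induction s using Finset.cons_induction with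
  | empty => simpa using expPS_zero
  | cons i s his ih =>
    rw [Finset.sum_cons, Finset.prod_cons,
      expPS_add (hf i (Finset.mem_cons_self i s))
        (by rw [map_sum]; exact Finset.sum_eq_zero fun j hj => hf j (Finset.mem_cons_of_mem hj)),
      ih fun j hj => hf j (Finset.mem_cons_of_mem hj)]

private lemma expPS_map {S : Type*} [CommRing S] [Algebra ℚ S] (f : PowerSeries ℚ) :
    PowerSeries.map (algebraMap ℚ S) (expPS f) = expPS (PowerSeries.map (algebraMap ℚ S) f) := by
  ext n
  rw [PowerSeries.coeff_map, expPS, expPS, PowerSeries.coeff_mk, PowerSeries.coeff_mk, map_sum]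
  refine Finset.sum_congr rfl fun j _ => ?_
  rw [← map_pow, PowerSeries.coeff_map, smul_eq_mul, map_mul, ← Algebra.smul_def]

private lemma expPS_rescale (a : R) (f : PowerSeries R) :
    PowerSeries.rescale a (expPS f) = expPS (PowerSeries.rescale a f) := by
  ext n
  rw [PowerSeries.coeff_rescale, expPS, expPS, PowerSeries.coeff_mk, PowerSeries.coeff_mk,
    Finset.mul_sum]
  refine Finset.sum_congr rfl fun j _ => ?_
  rw [← map_pow, PowerSeries.coeff_rescale, mul_smul_comm]

end basic

private lemma neg_pow_bernoulli {k : ℕ} (hk0 : k ≠ 0) (hk : k ≠ 1) :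
    (-1 : ℚ) ^ (k - 1) * bernoulli k = - bernoulli k := by
  conv_lhs => rw [bernoulli_eq_bernoulli'_of_ne_one hk, bernoulli'_eq_bernoulli]
  rw [← mul_assoc, ← pow_add]
  have hodd : Odd (k - 1 + k) := by
    rcases Nat.even_or_odd k with he | ho
    · exact (Nat.Even.sub_odd (by omega) he odd_one).add_even he
    · exact (Nat.Odd.sub_odd ho odd_one).add_odd ho
  rw [hodd.neg_one_pow, neg_one_mul]

/-- `∑_{r≥1} (-1)^{r-1} B_r t^r/(r · r!)`, the logarithm of `t/(e^t-1)`. -/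
private noncomputable def bG : PowerSeries ℚ :=
  PowerSeries.mk fun r => if r = 0 then 0
    else ((Nat.factorial r : ℚ))⁻¹ * ((-1 : ℚ) ^ (r - 1) * bernoulli r / r)

private lemma constantCoeff_bG : constantCoeff (R := ℚ) bG = 0 := by
  rw [← PowerSeries.coeff_zero_eq_constantCoeff_apply, bG, PowerSeries.coeff_mk]
  simp

private lemma X_mul_derivative_bG :
    PowerSeries.X * d⁄dX ℚ bG = 1 - PowerSeries.X - bernoulliPowerSeries ℚ := by
  ext k
  match k with
  | 0 =>
    simp [bernoulliPowerSeries, PowerSeries.coeff_zero_X_mul]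
  | 1 =>
    rw [PowerSeries.coeff_succ_X_mul, PowerSeries.coeff_derivative]
    rw [bG, PowerSeries.coeff_mk]
    simp [bernoulliPowerSeries]
    norm_num
  | (n+2) =>
    rw [PowerSeries.coeff_succ_X_mul, PowerSeries.coeff_derivative]
    rw [bG, PowerSeries.coeff_mk]
    simp only [Nat.succ_ne_zero, if_false, map_sub, PowerSeries.coeff_one,
      PowerSeries.coeff_X, bernoulliPowerSeries, PowerSeries.coeff_mk,
      Algebra.algebraMap_self, RingHom.id_apply, Nat.add_sub_cancel,
      if_neg (by omega : ¬(n + 2 = 0)), if_neg (by omega : ¬(n + 2 = 1))]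
    have hb : (-1:ℚ)^(n+1) * bernoulli (n+1+1) = -bernoulli (n+1+1) := by
      have := neg_pow_bernoulli (k := n+2) (by omega) (by omega)
      simpa using this
    rw [hb]
    have hfac : (Nat.factorial (n+2) : ℚ) ≠ 0 := Nat.cast_ne_zero.2 (Nat.factorial_ne_zero _)
    have hm2 : ((n:ℚ) + 2) ≠ 0 := by positivity
    push_cast
    field_simp
    ring

private lemma derivative_exp_q : d⁄dX ℚ (PowerSeries.exp ℚ) = PowerSeries.exp ℚ := by
  ext n
  rw [PowerSeries.coeff_derivative, PowerSeries.coeff_exp, PowerSeries.coeff_exp]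
  simp only [Algebra.algebraMap_self, RingHom.id_apply, one_div, Nat.factorial_succ]
  have h1 : ((n:ℚ) + 1) ≠ 0 := by positivity
  have h2 : (Nat.factorial n : ℚ) ≠ 0 := Nat.cast_ne_zero.2 (Nat.factorial_ne_zero n)
  push_cast
  field_simp

private lemma derivative_bernoulliPS :
    d⁄dX ℚ (bernoulliPowerSeries ℚ) = d⁄dX ℚ bG * bernoulliPowerSeries ℚ := by
  set B := bernoulliPowerSeries ℚ with hB
  have h1 : B * (PowerSeries.exp ℚ - 1) = PowerSeries.X :=
    bernoulliPowerSeries_mul_exp_sub_one ℚ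
  have h2 : B * PowerSeries.exp ℚ + (PowerSeries.exp ℚ - 1) * d⁄dX ℚ B = 1 := by
    have := congrArg (d⁄dX ℚ) h1
    rwa [Derivation.leibniz, smul_eq_mul, smul_eq_mul, map_sub, derivative_exp_q,
      Derivation.map_one_eq_zero, sub_zero, PowerSeries.derivative_X] at this
  have h3 : PowerSeries.X * d⁄dX ℚ B = (1 - PowerSeries.X - B) * B := by
    linear_combination B * h2 - (d⁄dX ℚ B + B) * h1
  have hX : (PowerSeries.X : PowerSeries ℚ) ≠ 0 := PowerSeries.X_ne_zero
  apply mul_left_cancel₀ hX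
  rw [h3, ← X_mul_derivative_bG]
  ring

private lemma bernoulliPS_eq_expPS_bG : bernoulliPowerSeries ℚ = expPS bG := by
  refine ode_unique (u := d⁄dX ℚ bG) derivative_bernoulliPS (derivative_expPS constantCoeff_bG) ?_
  rw [PowerSeries.coeff_zero_eq_constantCoeff, constantCoeff_expPS]
  rw [bernoulliPowerSeries]
  simp

private lemma factor_eq (m : ℕ) (i : Fin m) :
    (PowerSeries.mk fun k => (bernoulli k / (Nat.factorial k : ℚ)) • (MvPolynomial.X i ^ k)
      : PowerSeries (MvPolynomial (Fin m) ℚ)) =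
    PowerSeries.rescale (MvPolynomial.X i)
      (PowerSeries.map (algebraMap ℚ _) (bernoulliPowerSeries ℚ)) := by
  ext k
  rw [PowerSeries.coeff_rescale, PowerSeries.coeff_map, PowerSeries.coeff_mk,
    bernoulliPowerSeries, PowerSeries.coeff_mk]
  simp only [Algebra.algebraMap_self, RingHom.id_apply]
  rw [Algebra.smul_def, mul_comm]

private lemma sum_fI (m : ℕ) :
    (∑ i : Fin m, PowerSeries.rescale (MvPolynomial.X i)
        (PowerSeries.map (algebraMap ℚ (MvPolynomial (Fin m) ℚ)) bG)) =
      PowerSeries.mk fun r => if r = 0 then 0 else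
        ((Nat.factorial r : ℚ)⁻¹) • (((-1 : ℚ) ^ (r - 1) * bernoulli r / r) • psum m r) := by
  ext r
  rw [PowerSeries.coeff_mk]
  simp only [map_sum, PowerSeries.coeff_rescale, PowerSeries.coeff_map, bG, PowerSeries.coeff_mk]
  rcases eq_or_ne r 0 with h | h
  · subst h; simp
  · simp only [if_neg h]
    rw [smul_smul, psum, Finset.smul_sum]
    congr 1
    refine Finset.sum_congr rfl fun i _ => ?_
    rw [Algebra.smul_def, mul_comm]

private lemma constantCoeff_fI (m : ℕ) (i : Fin m) :
    PowerSeries.constantCoeff (R := MvPolynomial (Fin m) ℚ)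
      (PowerSeries.rescale (MvPolynomial.X i)
        (PowerSeries.map (algebraMap ℚ (MvPolynomial (Fin m) ℚ)) bG)) = 0 := by
  rw [← PowerSeries.coeff_zero_eq_constantCoeff_apply, PowerSeries.coeff_rescale,
    PowerSeries.coeff_map, pow_zero, one_mul, PowerSeries.coeff_zero_eq_constantCoeff,
    constantCoeff_bG, map_zero]

/-- `B_n(x_1,…,x_m) = 𝔹_n(b_1,b_2,…)` with `b_r = (-1)^{r-1} B_r p_r(x^m)/r`. -/
theorem higherBernoulli_eq_completeBell (m n : ℕ) :
    higherBernoulli m n =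
      completeBell n (fun r =>
        ((-1 : ℚ) ^ (r - 1) * bernoulli r / r) • psum m r) := by
  rw [higherBernoulli, completeBell]
  suffices h : (∏ i : Fin m, PowerSeries.mk fun k =>
        (bernoulli k / (Nat.factorial k : ℚ)) • (MvPolynomial.X i ^ k))
      = expPS (PowerSeries.mk fun i =>
          if i = 0 then 0 else ((Nat.factorial i : ℚ)⁻¹) •
            (((-1 : ℚ) ^ (i - 1) * bernoulli i / i) • psum m i)) by
    rw [h]
  calc (∏ i : Fin m, PowerSeries.mk fun k =>
        (bernoulli k / (Nat.factorial k : ℚ)) • (MvPolynomial.X i ^ k))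
      = ∏ i : Fin m, expPS (PowerSeries.rescale (MvPolynomial.X i)
          (PowerSeries.map (algebraMap ℚ (MvPolynomial (Fin m) ℚ)) bG)) := by
        refine Finset.prod_congr rfl fun i _ => ?_
        rw [factor_eq m i, bernoulliPS_eq_expPS_bG, expPS_map, expPS_rescale]
    _ = expPS (∑ i : Fin m, PowerSeries.rescale (MvPolynomial.X i)
          (PowerSeries.map (algebraMap ℚ (MvPolynomial (Fin m) ℚ)) bG)) :=
        (expPS_sum Finset.univ _ fun i _ => constantCoeff_fI m i).symm
    _ = _ := by rw [sum_fI]
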